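/- For every perfect subtree p of 2^{<ω}, there is an order-preserving (with respect to strict lexicographic order) bijection from the branches [p] of p onto Cantor space ℕ → {0,1}. -/

import Mathlib

def bres (x : ℕ → Bool) (n : ℕ) : List Bool := List.ofFn fun i : Fin n => x i.1

def PerfectTree (p : Set (List Bool)) : Prop :=
  p.Nonempty ∧ (∀ s ∈ p, ∀ t : List Bool, t <+: s → t ∈ p) ∧
    ∀ s ∈ p, ∃ t₁ ∈ p, ∃ t₂ ∈ p, s <+: t₁ ∧ s <+: t₂ ∧ ¬ t₁ <+: t₂ ∧ ¬ t₂ <+: t₁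

def branches (p : Set (List Bool)) : Set (ℕ → Bool) := {x | ∀ n, bres x n ∈ p}

/-- The strict lexicographic order on Cantor space: `x` and `y` first differ at
coordinate `n`, where `x` takes value `false` and `y` value `true`. -/
def cantorLexLt (x y : ℕ → Bool) : Prop :=
  ∃ n : ℕ, (∀ m, m < n → x m = y m) ∧ x n = false ∧ y n = true

namespace Stmt14Aux

/-- A splitting node of `p`: both immediate children lie in `p`. -/
def Split (p : Set (List Bool)) (t : List Bool) : Prop :=
  t ++ [false] ∈ p ∧ t ++ [true] ∈ p

variable {p : Set (List Bool)}

lemma Split.mem (hp : PerfectTree p) {t : List Bool} (h : Split p t) : t ∈ p :=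
  hp.2.1 _ h.1 t (by simp)

lemma nil_mem (hp : PerfectTree p) : ([] : List Bool) ∈ p := by
  obtain ⟨s, hs⟩ := hp.1
  exact hp.2.1 s hs [] (List.nil_prefix)

/-! basic lemmas about `bres` -/

lemma bres_length (x : ℕ → Bool) (n : ℕ) : (bres x n).length = n := by simp [bres]

lemma bres_getElem (x : ℕ → Bool) {n i : ℕ} (h : i < (bres x n).length) :
    (bres x n)[i] = x i := by simp [bres]

lemma bres_getD (x : ℕ → Bool) {i n : ℕ} (h : i < n) : (bres x n).getD i false = x i := by
  rw [List.getD_eq_getElem _ _ (by simpa [bres] using h)]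
  exact bres_getElem x _

lemma bres_succ (x : ℕ → Bool) (n : ℕ) : bres x (n + 1) = bres x n ++ [x n] := by
  refine List.ext_getElem (by simp [bres]) fun i h1 h2 => ?_
  rw [bres_getElem]
  rcases Nat.lt_or_ge i n with h | h
  · rw [List.getElem_append_left (by simpa [bres] using h), bres_getElem]
  · have hi : i = n := by simp [bres] at h1; omega
    subst hi
    rw [List.getElem_concat_length (by simp [bres])]

lemma init_getD {s : List Bool} {x : ℕ → Bool} (h : s = bres x s.length) {j : ℕ}
    (hj : j < s.length) : s.getD j false = x j := by
  conv_lhs => rw [h]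
  exact bres_getD x hj

lemma getD_prefix {u v : List Bool} (h : u <+: v) {i : ℕ} (hi : i < u.length) :
    v.getD i false = u.getD i false := by
  obtain ⟨w, rfl⟩ := h
  rw [List.getD_eq_getElem _ _ hi, List.getD_eq_getElem _ _ (by simp; omega),
    List.getElem_append_left hi]

lemma init_prefix {s t : List Bool} {x : ℕ → Bool} (ht : t = bres x t.length)
    (hp : s <+: t) : s = bres x s.length := by
  refine List.ext_getElem (by simp [bres]) fun i h1 h2 => ?_
  rw [bres_getElem]
  have h3 : i < t.length := lt_of_lt_of_le h1 hp.length_le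
  have hts := getD_prefix hp h1
  have hx := init_getD ht h3
  rw [hts] at hx
  rwa [List.getD_eq_getElem _ _ h1] at hx

lemma diverge : ∀ t₁ t₂ : List Bool, ¬ t₁ <+: t₂ → ¬ t₂ <+: t₁ →
    ∃ r a b, a ≠ b ∧ r ++ [a] <+: t₁ ∧ r ++ [b] <+: t₂ := by
  intro t₁
  induction t₁ with
  | nil => intro t₂ h _; exact absurd (List.nil_prefix) h
  | cons c t₁' ih =>
    intro t₂ h1 h2
    match t₂ with
    | [] => exact absurd (List.nil_prefix) h2
    | d :: t₂' =>
      by_cases hcd : c = d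
      · subst hcd
        have h1' : ¬ t₁' <+: t₂' := fun h => h1 (by simpa [List.cons_prefix_cons] using h)
        have h2' : ¬ t₂' <+: t₁' := fun h => h2 (by simpa [List.cons_prefix_cons] using h)
        obtain ⟨r, a, b, hab, ha, hb⟩ := ih t₂' h1' h2'
        exact ⟨c :: r, a, b, hab, by simpa [List.cons_prefix_cons] using ha,
          by simpa [List.cons_prefix_cons] using hb⟩
      · exact ⟨[], c, d, hcd, by simp [List.cons_prefix_cons], by simp [List.cons_prefix_cons]⟩

lemma exists_split (hp : PerfectTree p) {s : List Bool} (hs : s ∈ p) :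
    ∃ t, s <+: t ∧ Split p t := by
  obtain ⟨t₁, ht₁, t₂, ht₂, hst₁, hst₂, h12, h21⟩ := hp.2.2 s hs
  obtain ⟨r, a, b, hab, ha, hb⟩ := diverge t₁ t₂ h12 h21
  have hra : r ++ [a] ∈ p := hp.2.1 _ ht₁ _ ha
  have hrb : r ++ [b] ∈ p := hp.2.1 _ ht₂ _ hb
  have h1 : s <+: r ++ [a] := by
    rcases List.prefix_or_prefix_of_prefix hst₁ ha with h | h
    · exact h
    · have hq : r ++ [a] <+: r ++ [b] :=
        List.prefix_of_prefix_length_le (h.trans hst₂) hb (by simp)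
      have := hq.eq_of_length (by simp)
      simp only [List.append_cancel_left_eq, List.cons.injEq] at this
      exact absurd this.1 hab
  have h2 : s <+: r ++ [b] := by
    rcases List.prefix_or_prefix_of_prefix hst₂ hb with h | h
    · exact h
    · have hq : r ++ [b] <+: r ++ [a] :=
        List.prefix_of_prefix_length_le (h.trans hst₁) ha (by simp)
      have := hq.eq_of_length (by simp)
      simp only [List.append_cancel_left_eq, List.cons.injEq] at this
      exact absurd this.1.symm hab
  have hsr : s <+: r := by
    rcases le_or_gt s.length r.length with hl | hl
    · exact List.prefix_of_prefix_length_le h1 (List.prefix_append r [a]) (by simpa using hl)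
    · exfalso
      have e1 : s = r ++ [a] := h1.eq_of_length
        (by have := h1.length_le; simp at this ⊢; omega)
      have e2 : s = r ++ [b] := h2.eq_of_length
        (by have := h2.length_le; simp at this ⊢; omega)
      rw [e1] at e2
      simp only [List.append_cancel_left_eq, List.cons.injEq] at e2
      exact hab e2.1
  refine ⟨r, hsr, ?_⟩
  cases a <;> cases b
  · simp at hab
  · exact ⟨hra, hrb⟩
  · exact ⟨hrb, hra⟩
  · simp at hab

open Classical in
/-- The minimal-length splitting node of `p` extending `s`. -/
noncomputable def spl (p : Set (List Bool)) (s : List Bool) : List Bool :=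
  if h : ∃ t, (s <+: t ∧ Split p t) ∧ ∀ u, s <+: u → Split p u → t.length ≤ u.length
  then h.choose else []

lemma spl_spec (hp : PerfectTree p) {s : List Bool} (hs : s ∈ p) :
    (s <+: spl p s ∧ Split p (spl p s)) ∧
      ∀ u, s <+: u → Split p u → (spl p s).length ≤ u.length := by
  classical
  have hex : ∃ t, (s <+: t ∧ Split p t) ∧ ∀ u, s <+: u → Split p u → t.length ≤ u.length := by
    obtain ⟨t, ht⟩ := exists_split hp hs
    have hn : ∃ n, ∃ t : List Bool, t.length = n ∧ s <+: t ∧ Split p t :=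
      ⟨t.length, t, rfl, ht⟩
    obtain ⟨t', h1, h2, h3⟩ := Nat.find_spec hn
    refine ⟨t', ⟨h2, h3⟩, fun u hu hsu => ?_⟩
    rw [h1]
    exact Nat.find_min' hn ⟨u, rfl, hu, hsu⟩
  rw [spl, dif_pos hex]
  exact ⟨hex.choose_spec.1, hex.choose_spec.2⟩

/-- Every branch of `p` through `s` passes through `spl p s`. -/
lemma branch_passes_spl (hp : PerfectTree p) {s : List Bool} (hs : s ∈ p)
    {x : ℕ → Bool} (hx : x ∈ branches p) (hsx : s = bres x s.length) :
    spl p s = bres x (spl p s).length := by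
  classical
  obtain ⟨⟨hpre, hsplit⟩, hmin⟩ := spl_spec hp hs
  set t := spl p s with htdef
  by_contra hne
  have hdiff : ∃ k, k < t.length ∧ t.getD k false ≠ x k := by
    by_contra hall
    push_neg at hall
    apply hne
    refine List.ext_getElem (by simp [bres]) fun i h1 h2 => ?_
    rw [bres_getElem]
    have := hall i h1
    rwa [List.getD_eq_getElem _ _ h1] at this
  obtain ⟨hk1, hk2⟩ : Nat.find hdiff < t.length ∧ t.getD (Nat.find hdiff) false ≠ x (Nat.find hdiff) :=
    Nat.find_spec hdiff
  set k := Nat.find hdiff with hkdef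
  have hbelow : ∀ j, j < k → t.getD j false = x j := by
    intro j hj
    have := Nat.find_min hdiff hj
    push_neg at this
    exact this (lt_trans hj hk1)
  have hu : t.take k = bres x k := by
    refine List.ext_getElem (by simp [Nat.min_eq_left hk1.le, bres]) fun i h1 h2 => ?_
    have hik : i < k := by simpa [bres] using h2
    rw [List.getElem_take, bres_getElem, ← List.getD_eq_getElem _ false (lt_trans hik hk1)]
    exact hbelow i hik
  have hsk : s.length ≤ k := by
    by_contra hlt
    push_neg at hlt
    apply hk2
    rw [getD_prefix hpre hlt]
    exact init_getD hsx hlt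
  have hsu : s <+: t.take k :=
    List.prefix_of_prefix_length_le hpre (List.take_prefix k t)
      (by simpa [Nat.min_eq_left hk1.le] using hsk)
  have hmem_t : t ∈ p := hsplit.mem hp
  have hchild1 : t.take k ++ [x k] ∈ p := by
    have : t.take k ++ [x k] = bres x (k + 1) := by rw [hu, ← bres_succ]
    rw [this]; exact hx (k + 1)
  have hchild2 : t.take k ++ [t.getD k false] ∈ p := by
    have hpref : t.take k ++ [t.getD k false] <+: t := by
      rw [List.getD_eq_getElem _ _ hk1, ← List.concat_eq_append, List.take_concat_get hk1]
      exact List.take_prefix _ _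
    exact hp.2.1 _ hmem_t _ hpref
  have hsplitu : Split p (t.take k) := by
    cases hxk : x k <;> cases htk : t.getD k false
    · exact absurd (htk.trans hxk.symm) hk2
    · exact ⟨by rwa [hxk] at hchild1, by rwa [htk] at hchild2⟩
    · exact ⟨by rwa [htk] at hchild2, by rwa [hxk] at hchild1⟩
    · exact absurd (htk.trans hxk.symm) hk2
  have := hmin (t.take k) hsu hsplitu
  rw [List.length_take, Nat.min_eq_left hk1.le] at this
  omega

/-! ### The canonical monotone map from Cantor space to the branches of `p` -/

/-- The splitting node of `p` coded by the first `n` values of `a`. -/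
noncomputable def Dn (p : Set (List Bool)) (a : ℕ → Bool) : ℕ → List Bool
  | 0 => spl p []
  | n + 1 => spl p (Dn p a n ++ [a n])

lemma Dn_split (hp : PerfectTree p) (a : ℕ → Bool) : ∀ n, Split p (Dn p a n)
  | 0 => (spl_spec hp (nil_mem hp)).1.2
  | n + 1 => by
    have ih := Dn_split hp a n
    have hchild : Dn p a n ++ [a n] ∈ p := by
      cases h : a n
      · exact ih.1
      · exact ih.2
    exact (spl_spec hp hchild).1.2

lemma Dn_child_mem (hp : PerfectTree p) (a : ℕ → Bool) (n : ℕ) :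
    Dn p a n ++ [a n] ∈ p := by
  have ih := Dn_split hp a n
  cases h : a n
  · exact ih.1
  · exact ih.2

lemma Dn_succ_prefix (hp : PerfectTree p) (a : ℕ → Bool) (n : ℕ) :
    Dn p a n ++ [a n] <+: Dn p a (n + 1) :=
  (spl_spec hp (Dn_child_mem hp a n)).1.1

lemma Dn_prefix (hp : PerfectTree p) (a : ℕ → Bool) {n m : ℕ} (h : n ≤ m) :
    Dn p a n <+: Dn p a m := by
  induction m with
  | zero => simp [Nat.le_zero.mp h]
  | succ m ih =>
    rcases Nat.lt_or_ge n (m + 1) with h' | h'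
    · exact ((ih (Nat.lt_succ_iff.mp h')).trans
        ((List.prefix_append _ _).trans (Dn_succ_prefix hp a m)))
    · have : n = m + 1 := le_antisymm h h'
      subst this; exact List.prefix_rfl

lemma Dn_length (hp : PerfectTree p) (a : ℕ → Bool) : ∀ n, n ≤ (Dn p a n).length
  | 0 => Nat.zero_le _
  | n + 1 => by
    have h1 := Dn_length hp a n
    have h2 := (Dn_succ_prefix hp a n).length_le
    simp only [List.length_append, List.length_cons, List.length_nil] at h2
    omega

lemma Dn_congr (hp : PerfectTree p) {a b : ℕ → Bool} :
    ∀ n, (∀ m, m < n → a m = b m) → Dn p a n = Dn p b n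
  | 0, _ => rfl
  | n + 1, h => by
    have ih := Dn_congr hp n fun m hm => h m (Nat.lt_succ_of_lt hm)
    simp only [Dn, ih, h n (Nat.lt_succ_self n)]

/-- The branch of `p` determined by `a : Cantor`. -/
noncomputable def gfun (p : Set (List Bool)) (a : ℕ → Bool) : ℕ → Bool :=
  fun i => (Dn p a (i + 1)).getD i false

lemma gfun_eq (hp : PerfectTree p) (a : ℕ → Bool) {m i : ℕ} (h : i < (Dn p a m).length) :
    gfun p a i = (Dn p a m).getD i false := by
  show (Dn p a (i + 1)).getD i false = (Dn p a m).getD i false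
  rcases le_total m (i + 1) with hm | hm
  · exact getD_prefix (Dn_prefix hp a hm) h
  · have hi : i < (Dn p a (i + 1)).length :=
      lt_of_lt_of_le (Nat.lt_succ_self i) (Dn_length hp a (i + 1))
    exact (getD_prefix (Dn_prefix hp a hm) hi).symm

lemma bres_gfun (hp : PerfectTree p) (a : ℕ → Bool) (n : ℕ) :
    bres (gfun p a) n = (Dn p a n).take n := by
  have hn := Dn_length hp a n
  refine List.ext_getElem (by simp [bres, Nat.min_eq_left hn]) fun i h1 h2 => ?_
  have hin : i < n := by simpa [bres] using h1
  rw [bres_getElem, List.getElem_take, ← List.getD_eq_getElem _ false (lt_of_lt_of_le hin hn)]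
  exact gfun_eq hp a (lt_of_lt_of_le hin hn)

lemma gfun_branch (hp : PerfectTree p) (a : ℕ → Bool) : gfun p a ∈ branches p := by
  intro n
  rw [bres_gfun hp a n]
  exact hp.2.1 _ ((Dn_split hp a n).mem hp) _ (List.take_prefix _ _)

lemma gfun_lt (hp : PerfectTree p) {a b : ℕ → Bool} (h : cantorLexLt a b) :
    cantorLexLt (gfun p a) (gfun p b) := by
  obtain ⟨n, hag, ha, hb⟩ := h
  have hD : Dn p a n = Dn p b n := Dn_congr hp n hag
  refine ⟨(Dn p a n).length, fun m hm => ?_, ?_, ?_⟩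
  · rw [gfun_eq hp a hm, gfun_eq hp b (by rwa [← hD]), hD]
  · have hlen : (Dn p a n).length < (Dn p a (n + 1)).length := by
      have := (Dn_succ_prefix hp a n).length_le
      simp only [List.length_append, List.length_cons, List.length_nil] at this
      omega
    rw [gfun_eq hp a hlen, getD_prefix (Dn_succ_prefix hp a n) (by simp),
      List.getD_eq_getElem _ _ (by simp), List.getElem_concat_length rfl]
    exact ha
  · have hDlen : (Dn p a n).length = (Dn p b n).length := by rw [hD]
    have hlen : (Dn p a n).length < (Dn p b (n + 1)).length := by
      have := (Dn_succ_prefix hp b n).length_le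
      simp only [List.length_append, List.length_cons, List.length_nil] at this
      omega
    rw [gfun_eq hp b hlen, getD_prefix (Dn_succ_prefix hp b n) (by simp [hDlen]),
      List.getD_eq_getElem _ _ (by simp [hDlen]), List.getElem_concat_length hDlen]
    exact hb

/-! ### Properties of the lexicographic order -/

lemma lex_ne {x y : ℕ → Bool} (h : cantorLexLt x y) : x ≠ y := by
  obtain ⟨n, _, hx, hy⟩ := h
  intro he
  rw [he, hy] at hx
  simp at hx

lemma lex_asymm {x y : ℕ → Bool} (h : cantorLexLt x y) : ¬ cantorLexLt y x := by
  obtain ⟨n, hag, hx, hy⟩ := h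
  rintro ⟨m, hag', hy', hx'⟩
  rcases lt_trichotomy n m with hnm | hnm | hnm
  · have := hag' n hnm
    rw [hy, hx] at this
    simp at this
  · subst hnm
    rw [hy] at hy'
    simp at hy'
  · have := hag m hnm
    rw [hx', hy'] at this
    simp at this

lemma lex_trichotomy {x y : ℕ → Bool} (h : x ≠ y) : cantorLexLt x y ∨ cantorLexLt y x := by
  classical
  have hex : ∃ n, x n ≠ y n := by
    by_contra hc
    push_neg at hc
    exact h (funext hc)
  have hspec := Nat.find_spec hex
  have hbelow : ∀ m, m < Nat.find hex → x m = y m := by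
    intro m hm
    have := Nat.find_min hex hm
    push_neg at this
    exact this
  cases hx : x (Nat.find hex) <;> cases hy : y (Nat.find hex)
  · rw [hx, hy] at hspec; simp at hspec
  · exact Or.inl ⟨Nat.find hex, hbelow, hx, hy⟩
  · exact Or.inr ⟨Nat.find hex, fun m hm => (hbelow m hm).symm, hy, hx⟩
  · rw [hx, hy] at hspec; simp at hspec

lemma gfun_inj (hp : PerfectTree p) {a b : ℕ → Bool} (h : gfun p a = gfun p b) : a = b := by
  by_contra hne
  rcases lex_trichotomy hne with hl | hl
  · exact lex_ne (gfun_lt hp hl) h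
  · exact lex_ne (gfun_lt hp hl) h.symm

/-! ### Surjectivity of `gfun` onto the branches -/

noncomputable def Ex (p : Set (List Bool)) (x : ℕ → Bool) : ℕ → List Bool
  | 0 => spl p []
  | n + 1 => spl p (Ex p x n ++ [x (Ex p x n).length])

/-- The code of the branch `x`. -/
noncomputable def afun (p : Set (List Bool)) (x : ℕ → Bool) : ℕ → Bool :=
  fun n => x (Ex p x n).length

lemma Dn_afun (p : Set (List Bool)) (x : ℕ → Bool) : ∀ n, Dn p (afun p x) n = Ex p x n
  | 0 => rfl
  | n + 1 => by
    simp only [Dn, Ex, Dn_afun p x n, afun]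

lemma Ex_init (hp : PerfectTree p) {x : ℕ → Bool} (hx : x ∈ branches p) :
    ∀ n, Ex p x n = bres x (Ex p x n).length
  | 0 => by
    have h0 : ([] : List Bool) = bres x (List.length ([] : List Bool)) := by
      simp [bres]
    exact branch_passes_spl hp (nil_mem hp) hx h0
  | n + 1 => by
    have ih := Ex_init hp hx n
    set s := Ex p x n ++ [x (Ex p x n).length] with hsdef
    have hslen : s.length = (Ex p x n).length + 1 := by simp [hsdef]
    have hsinit : s = bres x s.length := by
      have hb : bres x ((Ex p x n).length + 1) = Ex p x n ++ [x (Ex p x n).length] := by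
        rw [bres_succ]
        congr 1
        exact ih.symm
      rw [hslen, hb]
    have hsmem : s ∈ p := by
      rw [hsinit, hslen]
      exact hx _
    exact branch_passes_spl hp hsmem hx hsinit

lemma gfun_afun (hp : PerfectTree p) {x : ℕ → Bool} (hx : x ∈ branches p) :
    gfun p (afun p x) = x := by
  funext i
  have hlen : i < (Dn p (afun p x) (i + 1)).length :=
    lt_of_lt_of_le (Nat.lt_succ_self i) (Dn_length hp (afun p x) (i + 1))
  rw [gfun_eq hp (afun p x) hlen]
  rw [Dn_afun p x (i + 1)] at hlen ⊢
  rw [init_getD (Ex_init hp hx (i + 1)) hlen]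

end Stmt14Aux

open Stmt14Aux in
theorem stmt14 (p : Set (List Bool)) (hp : PerfectTree p) :
    ∃ e : (ℕ → Bool) → (ℕ → Bool),
      Set.BijOn e (branches p) Set.univ ∧
      ∀ x ∈ branches p, ∀ y ∈ branches p, cantorLexLt x y → cantorLexLt (e x) (e y) := by
  classical
  refine ⟨fun x => if h : ∃ a, gfun p a = x then h.choose else fun _ => false, ⟨?_, ?_, ?_⟩, ?_⟩
  · intro x _; trivial
  · intro x hx y hy hexy
    have hxr : ∃ a, gfun p a = x := ⟨afun p x, gfun_afun hp hx⟩
    have hyr : ∃ a, gfun p a = y := ⟨afun p y, gfun_afun hp hy⟩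
    simp only [dif_pos hxr, dif_pos hyr] at hexy
    rw [← hxr.choose_spec, ← hyr.choose_spec, hexy]
  · intro a _
    refine ⟨gfun p a, gfun_branch hp a, ?_⟩
    have h : ∃ b, gfun p b = gfun p a := ⟨a, rfl⟩
    simp only [dif_pos h]
    exact gfun_inj hp h.choose_spec
  · intro x hx y hy hlt
    have hxr : ∃ a, gfun p a = x := ⟨afun p x, gfun_afun hp hx⟩
    have hyr : ∃ a, gfun p a = y := ⟨afun p y, gfun_afun hp hy⟩
    simp only [dif_pos hxr, dif_pos hyr]
    have hne : hxr.choose ≠ hyr.choose := by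
      intro he
      apply lex_ne hlt
      rw [← hxr.choose_spec, ← hyr.choose_spec, he]
    rcases lex_trichotomy hne with h | h
    · exact h
    · exfalso
      have := gfun_lt hp h
      rw [hxr.choose_spec, hyr.choose_spec] at this
      exact lex_asymm hlt this
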